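/- Let V be a finite type and let F be a nonempty superset-closed family of finsets of V, and let S be a member of F with S ≠ Finset.univ. Then the subgraph of the TAR graph of F induced on F \ {S} is connected; consequently, the only possible cut-vertex of the TAR graph of F is the full vertex set Finset.univ. -/

import Mathlib

variable {V : Type*} [Fintype V] [DecidableEq V]

/-- A family of finsets is superset-closed if it is closed under taking supersets. -/
def SupersetClosed (F : Finset (Finset V)) : Prop :=
  ∀ ⦃S T : Finset V⦄, S ∈ F → S ⊆ T → T ∈ F

/-- A minimal member of a family: a member no proper subset of which is a member. -/
def IsMinimalMem (F : Finset (Finset V)) (M : Finset V) : Prop :=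
  M ∈ F ∧ ∀ M' : Finset V, M' ⊂ M → M' ∉ F

/-- The TAR graph of a family of finsets: vertices are the members of the family,
two members being adjacent iff their symmetric difference has exactly one element. -/
def TARGraph (F : Finset (Finset V)) : SimpleGraph {S : Finset V // S ∈ F} where
  Adj S T := (symmDiff S.1 T.1).card = 1
  symm := by
    constructor
    intro S T h
    change (symmDiff S.1 T.1).card = 1 at h
    change (symmDiff T.1 S.1).card = 1
    rwa [symmDiff_comm] at h
  loopless := ⟨fun S (h : (symmDiff S.1 S.1).card = 1) => by simp [symmDiff_self] at h⟩

instance (F : Finset (Finset V)) : DecidableRel (TARGraph F).Adj :=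
  fun S T => inferInstanceAs (Decidable ((symmDiff S.1 T.1).card = 1))

/-- The subgraph of the TAR graph of `F` induced on `F` with the member `S` removed. -/
def TARGraphDel (F : Finset (Finset V)) (S : Finset V) :
    SimpleGraph {T : Finset V // T ∈ F ∧ T ≠ S} where
  Adj A B := (symmDiff A.1 B.1).card = 1
  symm := by
    constructor
    intro A B h
    change (symmDiff A.1 B.1).card = 1 at h
    change (symmDiff B.1 A.1).card = 1
    rwa [symmDiff_comm] at h
  loopless := ⟨fun A (h : (symmDiff A.1 A.1).card = 1) => by simp [symmDiff_self] at h⟩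

theorem stmt18 (F : Finset (Finset V)) (hne : F.Nonempty) (hsup : SupersetClosed F)
    (S : Finset V) (hS : S ∈ F) (hSuniv : S ≠ Finset.univ) :
    (TARGraphDel F S).Connected := by
  have huniv : (Finset.univ : Finset V) ∈ F := by
    obtain ⟨A, hA⟩ := hne
    exact hsup hA (Finset.subset_univ A)
  have hsd : ∀ (T : Finset V) (x : V), x ∉ T → (symmDiff T (insert x T)).card = 1 := by
    intro T x hx
    have : symmDiff T (insert x T) = {x} := by
      ext y
      simp only [symmDiff_def, Finset.sup_eq_union, Finset.mem_union, Finset.mem_sdiff,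
        Finset.mem_insert, Finset.mem_singleton]
      constructor
      · rintro (⟨hy, h⟩ | ⟨h1, h2⟩)
        · exact absurd (Or.inr hy) h
        · rcases h1 with h1 | h1
          · exact h1
          · exact absurd h1 h2
      · rintro rfl
        exact Or.inr ⟨Or.inl rfl, hx⟩
    rw [this, Finset.card_singleton]
  have key : ∀ (n : ℕ) (T : Finset V) (hT : T ∈ F) (h2 : T ≠ S),
      (∃ x ∈ T, x ∉ S) → (Finset.univ \ T).card ≤ n →
      (TARGraphDel F S).Reachable ⟨Finset.univ, huniv, Ne.symm hSuniv⟩ ⟨T, hT, h2⟩ := by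
    intro n
    induction n with
    | zero =>
      intro T hT h2 _ hcard
      have hTeq : T = Finset.univ := by
        have h0 := Finset.card_eq_zero.mp (Nat.le_zero.mp hcard)
        have h' := Finset.sdiff_eq_empty_iff_subset.mp h0
        exact Finset.univ_subset_iff.mp h'
      have he : (⟨Finset.univ, huniv, Ne.symm hSuniv⟩ : {T : Finset V // T ∈ F ∧ T ≠ S})
          = ⟨T, hT, h2⟩ := Subtype.ext hTeq.symm
      rw [he]
    | succ n ih =>
      intro T hT h2 hx hcard
      by_cases hTu : T = Finset.univ
      · have he : (⟨Finset.univ, huniv, Ne.symm hSuniv⟩ : {T : Finset V // T ∈ F ∧ T ≠ S})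
            = ⟨T, hT, h2⟩ := Subtype.ext hTu.symm
        rw [he]
      · obtain ⟨y, hy⟩ : (Finset.univ \ T).Nonempty := by
          rw [Finset.sdiff_nonempty]
          exact fun h => hTu (Finset.univ_subset_iff.mp h)
        have hyT : y ∉ T := (Finset.mem_sdiff.mp hy).2
        obtain ⟨x, hxT, hxS⟩ := hx
        have hT' : insert y T ∈ F := hsup hT (Finset.subset_insert y T)
        have h2' : insert y T ≠ S := fun h => hxS (h ▸ Finset.mem_insert_of_mem hxT)
        have hreach : (TARGraphDel F S).Reachable ⟨Finset.univ, huniv, Ne.symm hSuniv⟩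
            ⟨insert y T, hT', h2'⟩ := by
          apply ih _ hT' h2' ⟨x, Finset.mem_insert_of_mem hxT, hxS⟩
          have : (Finset.univ \ insert y T).card < (Finset.univ \ T).card := by
            apply Finset.card_lt_card
            constructor
            · exact Finset.sdiff_subset_sdiff (le_refl _) (Finset.subset_insert y T)
            · intro hsub
              have := hsub hy
              simp [Finset.mem_sdiff] at this
          omega
        have hadj : (TARGraphDel F S).Adj ⟨insert y T, hT', h2'⟩ ⟨T, hT, h2⟩ := by
          show (symmDiff (insert y T) T).card = 1
          rw [symmDiff_comm]
          exact hsd T y hyT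
        exact hreach.trans hadj.reachable
  rw [SimpleGraph.connected_iff]
  refine ⟨?_, ⟨⟨Finset.univ, huniv, Ne.symm hSuniv⟩⟩⟩
  · intro A B
    have hxS : ∃ x, x ∉ S := by
      by_contra h
      push_neg at h
      exact hSuniv (Finset.eq_univ_of_forall h)
    have base : ∀ (C : {T : Finset V // T ∈ F ∧ T ≠ S}),
        (TARGraphDel F S).Reachable ⟨Finset.univ, huniv, Ne.symm hSuniv⟩ C := by
      rintro ⟨T, hT, h2⟩
      by_cases hx : ∃ x ∈ T, x ∉ S
      · exact key _ T hT h2 hx (le_refl _)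
      · push_neg at hx
        obtain ⟨x, hxS'⟩ := hxS
        have hxT : x ∉ T := fun h => hxS' (hx x h)
        have hT' : insert x T ∈ F := hsup hT (Finset.subset_insert x T)
        have h2' : insert x T ≠ S := fun h => hxS' (h ▸ Finset.mem_insert_self x T)
        have hreach := key _ (insert x T) hT' h2'
          ⟨x, Finset.mem_insert_self x T, hxS'⟩ (le_refl _)
        have hadj : (TARGraphDel F S).Adj ⟨insert x T, hT', h2'⟩ ⟨T, hT, h2⟩ := by
          show (symmDiff (insert x T) T).card = 1
          rw [symmDiff_comm]
          exact hsd T x hxT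
        exact hreach.trans hadj.reachable
    exact (base A).symm.trans (base B)
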